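/- arXiv:1502.06535 — 5 statements merged into one kernel-verified Lean document; each statement's English description precedes it below -/
import Mathlib

section
/- Let (X,d) be a metric space, f : X → X continuous, K ⊆ X compact, and φ : K → ℝ continuous. Suppose a point x ∈ K is controlled at all scales with respect to φ: there exist sequences t_i → ∞ of positive integers and β_i → 0 of positive reals such that for every i, the whole forward orbit of x stays in K and there is an infinite set P_i ⊆ ℕ of control times containing 0 with consecutive elements k < ℓ satisfying ℓ − k ≤ t_i and |(1/(ℓ−k)) ∑_{j=k}^{ℓ−1} φ(f^j(x))| ≤ β_i. Then for every point y in the ω-limit set of x, the Birkhoff averages (1/n) ∑_{j=0}^{n−1} φ(f^j(y)) converge to 0 as n → ∞, and the convergence is uniform over ω(x). -/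
open Filter Topology Set

variable {X : Type*} [MetricSpace X]

/-- Birkhoff sum of `φ` of length `n` along the orbit of `f`. -/
noncomputable def birkhoff (f : X → X) (φ : X → ℝ) (n : ℕ) (x : X) : ℝ :=
  ∑ i ∈ Finset.range n, φ (f^[i] x)

/-- `x` is `(β, t, ∞)`-controlled: its whole forward orbit stays in `K` and there is an
infinite set `P` of control times containing `0` whose consecutive elements `k < l`
satisfy `l - k ≤ t` and `|birkhoff (l-k) (f^[k] x)| ≤ β * (l - k)`. -/
def ControlledAt (f : X → X) (K : Set X) (φ : X → ℝ) (β : ℝ) (t : ℕ) (x : X) : Prop :=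
  (∀ n : ℕ, f^[n] x ∈ K) ∧
  ∃ P : Set ℕ, 0 ∈ P ∧ P.Infinite ∧
    ∀ k ∈ P, ∀ l ∈ P, k < l → (∀ m ∈ P, ¬(k < m ∧ m < l)) →
      l - k ≤ t ∧ |birkhoff f φ (l - k) (f^[k] x)| ≤ β * ((l - k : ℕ) : ℝ)

/-- `x` is controlled at all scales with respect to `φ`. -/
def ControlledAllScales (f : X → X) (K : Set X) (φ : X → ℝ) (x : X) : Prop :=
  ∃ (t : ℕ → ℕ) (β : ℕ → ℝ), (∀ i, 0 < t i) ∧ (∀ i, 0 < β i) ∧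
    Tendsto t atTop atTop ∧ Tendsto β atTop (𝓝 0) ∧
    ∀ i, ControlledAt f K φ (β i) (t i) x

lemma birkhoff_add (f : X → X) (φ : X → ℝ) (k n : ℕ) (x : X) :
    birkhoff f φ (k + n) x = birkhoff f φ k x + birkhoff f φ n (f^[k] x) := by
  unfold birkhoff
  rw [Finset.sum_range_add]
  congr 1
  refine Finset.sum_congr rfl fun i _ => ?_
  rw [add_comm k i, Function.iterate_add_apply]

lemma abs_birkhoff_le {f : X → X} {φ : X → ℝ} {K : Set X} {M : ℝ}
    (hM : ∀ z ∈ K, |φ z| ≤ M) {x : X} (horb : ∀ n : ℕ, f^[n] x ∈ K) (n : ℕ) :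
    |birkhoff f φ n x| ≤ M * n := by
  calc |birkhoff f φ n x| ≤ ∑ i ∈ Finset.range n, |φ (f^[i] x)| :=
        Finset.abs_sum_le_sum_abs _ _
    _ ≤ ∑ _i ∈ Finset.range n, M := Finset.sum_le_sum fun i _ => hM _ (horb i)
    _ = M * n := by simp [mul_comm]

/-- Successor lemma: every control time has a next control time. -/
lemma controlled_succ {f : X → X} {φ : X → ℝ} {β : ℝ} {t : ℕ} {x : X} {P : Set ℕ}
    (hPinf : P.Infinite)
    (hP : ∀ k ∈ P, ∀ l ∈ P, k < l → (∀ m ∈ P, ¬(k < m ∧ m < l)) →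
      l - k ≤ t ∧ |birkhoff f φ (l - k) (f^[k] x)| ≤ β * ((l - k : ℕ) : ℝ)) :
    ∀ k ∈ P, ∃ l ∈ P, k < l ∧ l - k ≤ t ∧
      |birkhoff f φ (l - k) (f^[k] x)| ≤ β * ((l - k : ℕ) : ℝ) ∧
      ∀ m ∈ P, k < m → l ≤ m := by
  intro k hk
  obtain ⟨m0, hm0P, hkm0⟩ := hPinf.exists_gt k
  have hne : {m | m ∈ P ∧ k < m}.Nonempty := ⟨m0, hm0P, hkm0⟩
  set l := sInf {m | m ∈ P ∧ k < m} with hl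
  have hlmem : l ∈ P ∧ k < l := Nat.sInf_mem hne
  have hmin : ∀ m ∈ P, k < m → l ≤ m := fun m hm hkm => Nat.sInf_le ⟨hm, hkm⟩
  have hnb : ∀ m ∈ P, ¬(k < m ∧ m < l) := fun m hm ⟨h1, h2⟩ =>
    absurd (hmin m hm h1) (not_le.mpr h2)
  obtain ⟨h1, h2⟩ := hP k hk l hlmem.1 hlmem.2 hnb
  exact ⟨l, hlmem.1, hlmem.2, h1, h2, hmin⟩

/-- Chain lemma: between any two control times the Birkhoff sum is `β`-small. -/
lemma controlled_chain {f : X → X} {φ : X → ℝ} {β : ℝ} {t : ℕ} {x : X} {P : Set ℕ}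
    (hPinf : P.Infinite)
    (hP : ∀ k ∈ P, ∀ l ∈ P, k < l → (∀ m ∈ P, ¬(k < m ∧ m < l)) →
      l - k ≤ t ∧ |birkhoff f φ (l - k) (f^[k] x)| ≤ β * ((l - k : ℕ) : ℝ)) :
    ∀ d : ℕ, ∀ a ∈ P, ∀ l ∈ P, a ≤ l → l - a ≤ d →
      |birkhoff f φ l x - birkhoff f φ a x| ≤ β * ((l - a : ℕ) : ℝ) := by
  intro d
  induction d with
  | zero =>
    intro a _ l _ hal hd
    have : l = a := by omega
    subst this
    simp
  | succ d ih =>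
    intro a ha l hl hal hd
    rcases eq_or_lt_of_le hal with rfl | halt
    · simp
    obtain ⟨m, hmP, ham, hgap, hbd, hmin⟩ := controlled_succ hPinf hP a ha
    have hml : m ≤ l := hmin l hl halt
    have e1 : birkhoff f φ m x - birkhoff f φ a x = birkhoff f φ (m - a) (f^[a] x) := by
      have h := birkhoff_add f φ a (m - a) x
      rw [Nat.add_sub_cancel' ham.le] at h
      linarith
    have ih' : |birkhoff f φ l x - birkhoff f φ m x| ≤ β * ((l - m : ℕ) : ℝ) := by
      refine ih m hmP l hl hml ?_
      omega
    have key : birkhoff f φ l x - birkhoff f φ a x =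
        (birkhoff f φ m x - birkhoff f φ a x) + (birkhoff f φ l x - birkhoff f φ m x) := by
      ring
    have hcast : ((m - a : ℕ) : ℝ) + ((l - m : ℕ) : ℝ) = ((l - a : ℕ) : ℝ) := by
      rw [← Nat.cast_add]
      congr 1
      omega
    calc |birkhoff f φ l x - birkhoff f φ a x|
        ≤ |birkhoff f φ m x - birkhoff f φ a x| + |birkhoff f φ l x - birkhoff f φ m x| := by
          rw [key]; exact abs_add_le _ _
      _ ≤ β * ((m - a : ℕ) : ℝ) + β * ((l - m : ℕ) : ℝ) := by
          rw [e1]; exact add_le_add hbd ih'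
      _ = β * ((l - a : ℕ) : ℝ) := by rw [← mul_add, hcast]

/-- The main quantitative bound along the orbit of `x`. -/
lemma controlled_bound {f : X → X} {K : Set X} {φ : X → ℝ} {β : ℝ} {t : ℕ} {x : X} {M : ℝ}
    (hβ : 0 ≤ β) (hM : ∀ z ∈ K, |φ z| ≤ M) (hM0 : 0 ≤ M)
    (hc : ControlledAt f K φ β t x) (k n : ℕ) :
    |birkhoff f φ n (f^[k] x)| ≤ β * n + (β * t + 2 * M * t) := by
  classical
  obtain ⟨horb, P, hP0, hPinf, hP⟩ := hc
  set a := Nat.findGreatest (· ∈ P) k with ha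
  set b := Nat.findGreatest (· ∈ P) (k + n) with hb
  have haP : a ∈ P := Nat.findGreatest_spec (Nat.zero_le k) hP0
  have hbP : b ∈ P := Nat.findGreatest_spec (Nat.zero_le (k + n)) hP0
  have hak : a ≤ k := Nat.findGreatest_le k
  have hbkn : b ≤ k + n := Nat.findGreatest_le (k + n)
  have hab : a ≤ b := by
    by_contra h
    exact Nat.findGreatest_is_greatest (not_le.mp h) (hak.trans (Nat.le_add_right _ _)) haP
  -- gap after a covers k
  obtain ⟨a', ha'P, haa', hgapa, _, _⟩ := controlled_succ hPinf hP a haP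
  have hka' : k < a' := by
    by_contra h
    exact Nat.findGreatest_is_greatest haa' (not_lt.mp h) ha'P
  have h1 : k - a < t := by omega
  -- gap after b covers k + n
  obtain ⟨b', hb'P, hbb', hgapb, _, _⟩ := controlled_succ hPinf hP b hbP
  have hknb' : k + n < b' := by
    by_contra h
    exact Nat.findGreatest_is_greatest hbb' (not_lt.mp h) hb'P
  have h2 : k + n - b < t := by omega
  -- chain bound between a and b
  have hchain : |birkhoff f φ b x - birkhoff f φ a x| ≤ β * ((b - a : ℕ) : ℝ) :=
    controlled_chain hPinf hP (b - a) a haP b hbP hab le_rfl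
  -- boundary bounds
  have horb' : ∀ m : ℕ, ∀ j : ℕ, f^[j] (f^[m] x) ∈ K := by
    intro m j
    rw [← Function.iterate_add_apply]
    exact horb _
  have hbd1 : |birkhoff f φ k x - birkhoff f φ a x| ≤ M * ((k - a : ℕ) : ℝ) := by
    have h := birkhoff_add f φ a (k - a) x
    rw [Nat.add_sub_cancel' hak] at h
    have := abs_birkhoff_le hM (horb' a) (k - a)
    rw [h]; simpa using this
  have hbd2 : |birkhoff f φ (k + n) x - birkhoff f φ b x| ≤ M * ((k + n - b : ℕ) : ℝ) := by
    have h := birkhoff_add f φ b (k + n - b) x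
    rw [Nat.add_sub_cancel' hbkn] at h
    have := abs_birkhoff_le hM (horb' b) (k + n - b)
    rw [h]; simpa using this
  have h5 : birkhoff f φ n (f^[k] x) = birkhoff f φ (k + n) x - birkhoff f φ k x := by
    have h := birkhoff_add f φ k n x
    linarith
  -- cast inequalities
  have c1 : ((b - a : ℕ) : ℝ) ≤ (n : ℝ) + (t : ℝ) := by
    have : b - a ≤ n + t := by omega
    calc ((b - a : ℕ) : ℝ) ≤ ((n + t : ℕ) : ℝ) := Nat.cast_le.mpr this
      _ = (n : ℝ) + (t : ℝ) := by push_cast; ring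
  have c2 : ((k - a : ℕ) : ℝ) ≤ (t : ℝ) := Nat.cast_le.mpr (by omega)
  have c3 : ((k + n - b : ℕ) : ℝ) ≤ (t : ℝ) := Nat.cast_le.mpr (by omega)
  have m1 : β * ((b - a : ℕ) : ℝ) ≤ β * ((n : ℝ) + (t : ℝ)) :=
    mul_le_mul_of_nonneg_left c1 hβ
  have m2 : M * ((k - a : ℕ) : ℝ) ≤ M * (t : ℝ) := mul_le_mul_of_nonneg_left c2 hM0
  have m3 : M * ((k + n - b : ℕ) : ℝ) ≤ M * (t : ℝ) := mul_le_mul_of_nonneg_left c3 hM0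
  have tri : |birkhoff f φ n (f^[k] x)| ≤
      |birkhoff f φ b x - birkhoff f φ a x| + |birkhoff f φ k x - birkhoff f φ a x|
        + |birkhoff f φ (k + n) x - birkhoff f φ b x| := by
    rw [h5]
    have e : birkhoff f φ (k + n) x - birkhoff f φ k x =
        (birkhoff f φ b x - birkhoff f φ a x) - (birkhoff f φ k x - birkhoff f φ a x)
          + (birkhoff f φ (k + n) x - birkhoff f φ b x) := by ring
    rw [e]
    calc |_ + (birkhoff f φ (k + n) x - birkhoff f φ b x)|
        ≤ |birkhoff f φ b x - birkhoff f φ a x - (birkhoff f φ k x - birkhoff f φ a x)|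
          + |birkhoff f φ (k + n) x - birkhoff f φ b x| := abs_add_le _ _
      _ ≤ _ := by
          gcongr
          exact abs_sub _ _
  linarith

/-- If `x ∈ K` is controlled at all scales with respect to `φ`, then the Birkhoff averages of
`φ` converge to `0` at every point of the ω-limit set of `x`, uniformly over the ω-limit set. -/
theorem birkhoff_average_tendsto_zero_on_omegaLimit
    {f : X → X} {K : Set X} {φ : X → ℝ}
    (hf : Continuous f) (hK : IsCompact K) (hφ : ContinuousOn φ K)
    {x : X} (hx : x ∈ K) (hctrl : ControlledAllScales f K φ x) :
    (∀ y : X, MapClusterPt y atTop (fun n => f^[n] x) →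
      Tendsto (fun n : ℕ => birkhoff f φ n y / n) atTop (𝓝 0)) ∧
    (∀ ε : ℝ, 0 < ε → ∃ N : ℕ, ∀ n ≥ N, ∀ y : X,
      MapClusterPt y atTop (fun n => f^[n] x) → |birkhoff f φ n y| ≤ ε * n) := by
  obtain ⟨t, β, htpos, hβpos, htt, hβ0, hall⟩ := hctrl
  obtain ⟨M₀, hM₀⟩ := hK.exists_bound_of_continuousOn hφ
  set M := max M₀ 0 with hMdef
  have hM0 : 0 ≤ M := le_max_right _ _
  have hM : ∀ z ∈ K, |φ z| ≤ M := fun z hz => le_trans (hM₀ z hz) (le_max_left _ _)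
  have horb : ∀ n : ℕ, f^[n] x ∈ K := (hall 0).1
  -- key bound transferred to cluster points
  have key : ∀ i : ℕ, ∀ y : X, MapClusterPt y atTop (fun n => f^[n] x) → ∀ n : ℕ,
      |birkhoff f φ n y| ≤ β i * n + (β i * t i + 2 * M * t i) := by
    intro i y hy n
    obtain ⟨ψ, hψ, hconv⟩ := TopologicalSpace.FirstCountableTopology.tendsto_subseq hy
    have hiter : ∀ m : ℕ, Tendsto (fun j => f^[m] (f^[ψ j] x)) atTop (𝓝 (f^[m] y)) :=
      fun m => ((hf.iterate m).tendsto y).comp hconv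
    have hmemK : ∀ m j : ℕ, f^[m] (f^[ψ j] x) ∈ K := by
      intro m j
      rw [← Function.iterate_add_apply]
      exact horb _
    have hyK : ∀ m : ℕ, f^[m] y ∈ K := fun m =>
      hK.isClosed.mem_of_tendsto (hiter m) (Eventually.of_forall (hmemK m))
    have hφm : ∀ m : ℕ, Tendsto (fun j => φ (f^[m] (f^[ψ j] x))) atTop (𝓝 (φ (f^[m] y))) := by
      intro m
      refine (hφ (f^[m] y) (hyK m)).tendsto.comp ?_
      rw [tendsto_nhdsWithin_iff]
      exact ⟨hiter m, Eventually.of_forall (hmemK m)⟩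
    have hbk : Tendsto (fun j => birkhoff f φ n (f^[ψ j] x)) atTop (𝓝 (birkhoff f φ n y)) := by
      unfold birkhoff
      exact tendsto_finset_sum _ fun m _ => hφm m
    have hb : ∀ j : ℕ, |birkhoff f φ n (f^[ψ j] x)| ≤ β i * n + (β i * t i + 2 * M * t i) :=
      fun j => controlled_bound (hβpos i).le hM hM0 (hall i) (ψ j) n
    exact le_of_tendsto hbk.abs (Eventually.of_forall hb)
  -- part 2: uniform bound
  have part2 : ∀ ε : ℝ, 0 < ε → ∃ N : ℕ, ∀ n ≥ N, ∀ y : X,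
      MapClusterPt y atTop (fun n => f^[n] x) → |birkhoff f φ n y| ≤ ε * n := by
    intro ε hε
    have hev : ∀ᶠ i in atTop, β i < ε / 2 :=
      hβ0.eventually (gt_mem_nhds (by linarith : (0 : ℝ) < ε / 2))
    obtain ⟨i, hi⟩ := hev.exists
    set C := β i * t i + 2 * M * t i with hC
    have hC0 : 0 ≤ C := by
      have := (hβpos i).le
      have ht0 : (0 : ℝ) ≤ t i := Nat.cast_nonneg _
      positivity
    obtain ⟨N, hN⟩ := exists_nat_ge (C / (ε / 2))
    have hNC : C ≤ ε / 2 * N := by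
      rw [div_le_iff₀ (by linarith : (0 : ℝ) < ε / 2)] at hN
      linarith
    refine ⟨N, fun n hn y hy => ?_⟩
    have hkey := key i y hy n
    have hn' : (N : ℝ) ≤ (n : ℝ) := Nat.cast_le.mpr hn
    have hn0 : (0 : ℝ) ≤ (n : ℝ) := Nat.cast_nonneg _
    have hβn : β i * n ≤ ε / 2 * n := mul_le_mul_of_nonneg_right hi.le hn0
    calc |birkhoff f φ n y| ≤ β i * n + C := hkey
      _ ≤ ε / 2 * n + ε / 2 * N := add_le_add hβn hNC
      _ ≤ ε / 2 * n + ε / 2 * n := by nlinarith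
      _ = ε * n := by ring
  refine ⟨?_, part2⟩
  intro y hy
  rw [Metric.tendsto_atTop]
  intro ε hε
  obtain ⟨N, hN⟩ := part2 (ε / 2) (by linarith)
  refine ⟨max N 1, fun n hn => ?_⟩
  have hn1 : 1 ≤ n := le_trans (le_max_right _ _) hn
  have hnN : N ≤ n := le_trans (le_max_left _ _) hn
  have h := hN n hnN y hy
  have hnpos : (0 : ℝ) < n := by exact_mod_cast hn1
  rw [Real.dist_eq, sub_zero, abs_div, abs_of_pos hnpos, div_lt_iff₀ hnpos]
  calc |birkhoff f φ n y| ≤ ε / 2 * n := h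
    _ < ε * n := by nlinarith
end

section
/- Conversely to the previous lemma: if Ω ⊆ K is a compact f-invariant set on which the Birkhoff averages of φ converge uniformly to zero, then every point of Ω is controlled at all scales with respect to φ. -/
open Filter Topology Set

variable {X : Type*} [MetricSpace X]

/-- Converse lemma: if `Ω ⊆ K` is a compact `f`-invariant set on which the Birkhoff averages
of `φ` converge uniformly to zero, then every point of `Ω` is controlled at all scales. -/
theorem controlledAllScales_of_uniform_birkhoff_average
    {f : X → X} {K : Set X} {φ : X → ℝ}
    (hf : Continuous f) (hK : IsCompact K) (hφ : ContinuousOn φ K)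
    {Ω : Set X} (hΩK : Ω ⊆ K) (hΩc : IsCompact Ω) (hinv : Set.MapsTo f Ω Ω)
    (hunif : ∀ ε : ℝ, 0 < ε → ∃ N : ℕ, ∀ n ≥ N, ∀ x ∈ Ω, |birkhoff f φ n x| ≤ ε * n) :
    ∀ x ∈ Ω, ControlledAllScales f K φ x := by
  intro x hx
  have horb : ∀ n : ℕ, f^[n] x ∈ Ω := fun n => hinv.iterate n hx
  choose N hN using fun i : ℕ => hunif (1 / ((i : ℝ) + 1)) (by positivity)
  refine ⟨fun i => N i + i + 1, fun i => 1 / ((i : ℝ) + 1),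
    fun i => Nat.succ_pos _, fun i => by positivity, ?_, ?_, ?_⟩
  · exact tendsto_atTop_mono (fun i => by omega : ∀ i : ℕ, i ≤ N i + i + 1) tendsto_id
  · exact tendsto_one_div_add_atTop_nhds_zero_nat
  · intro i
    set n := N i + i + 1 with hn
    refine ⟨fun m => hΩK (horb m), {m | n ∣ m}, dvd_zero n, ?_, ?_⟩
    · refine Set.infinite_of_injective_forall_mem (f := fun k : ℕ => k * n) ?_
        fun a => ⟨a, (Nat.mul_comm a n)⟩
      intro a b hab
      simpa [hn] using Nat.eq_of_mul_eq_mul_right (by omega) hab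
    · intro k hk l hl hkl hbet
      obtain ⟨a, rfl⟩ := hk
      obtain ⟨b, rfl⟩ := hl
      have hnpos : 0 < n := by omega
      have hab : a < b := lt_of_mul_lt_mul_left hkl (Nat.zero_le n)
      have hb : b = a + 1 := by
        by_contra h
        exact hbet (n * (a + 1)) ⟨a + 1, rfl⟩
          ⟨(Nat.mul_lt_mul_left hnpos).mpr (by omega),
           (Nat.mul_lt_mul_left hnpos).mpr (by omega)⟩
      subst hb
      have hdiff : n * (a + 1) - n * a = n := by ring_nf; omega
      rw [hdiff]
      exact ⟨le_refl n, hN i n (by omega) _ (horb _)⟩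
end

section
/- Let 𝔉 be a flip-flop family with respect to f and φ. Then every member D ∈ 𝔉 contains a point x such that the restriction of f to the ω-limit set ω(x) has positive topological entropy; in fact h_top(f|ω(x)) ≥ (log 2)/τ for some positive integer τ depending only on the flip-flop family. -/
open Filter Topology Set

variable {X : Type*} [MetricSpace X]

/-- A flip-flop family for `f : X → X` and `φ : K → ℝ`: two disjoint families of compact
subsets of `K` with diameters bounded by `d₀`, separated in sign by `α` (FF1), with the
covering property (FF2) and uniform expansion `lam > 1` along segments (FF3). -/
structure FlipFlopFamily (f : X → X) (K : Set X) (φ : X → ℝ) where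
  pos : Set (Set X)
  neg : Set (Set X)
  disj : Disjoint pos neg
  mem_compact : ∀ D ∈ pos ∪ neg, IsCompact D
  mem_subset : ∀ D ∈ pos ∪ neg, D ⊆ K
  mem_nonempty : ∀ D ∈ pos ∪ neg, D.Nonempty
  d₀ : ℝ
  diam_le : ∀ D ∈ pos ∪ neg, Metric.diam D ≤ d₀
  α : ℝ
  α_pos : 0 < α
  ff1_pos : ∀ D ∈ pos, ∀ x ∈ D, α < φ x
  ff1_neg : ∀ D ∈ neg, ∀ x ∈ D, φ x < -α
  ff2_pos : ∀ D ∈ pos ∪ neg, ∃ Dp, IsCompact Dp ∧ Dp ⊆ D ∧ f '' Dp ∈ pos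
  ff2_neg : ∀ D ∈ pos ∪ neg, ∃ Dm, IsCompact Dm ∧ Dm ⊆ D ∧ f '' Dm ∈ neg
  lam : ℝ
  lam_gt_one : 1 < lam
  ff3 : ∀ E : Set X, (∃ D ∈ pos ∪ neg, E ⊆ D) → f '' E ∈ pos ∪ neg →
    ∀ x ∈ E, ∀ y ∈ E, lam * dist x y ≤ dist (f x) (f y)

/-- An `𝔉`-segment of length `T`: a sequence `D 0, …, D T` with `f '' (D i) = D (i+1)`,
each `D i` contained in a member of `𝔉`, and `D T` a member of `𝔉`. `D 0` is its entrance. -/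
def IsSegment {f : X → X} {K : Set X} {φ : X → ℝ} (𝔉 : FlipFlopFamily f K φ)
    (D : ℕ → Set X) (T : ℕ) : Prop :=
  (∀ i < T, f '' D i = D (i + 1)) ∧ (∀ i ≤ T, ∃ D' ∈ 𝔉.pos ∪ 𝔉.neg, D i ⊆ D') ∧
    D T ∈ 𝔉.pos ∪ 𝔉.neg

/-! ### Auxiliary machinery for the proof -/

open Dynamics UniformSpace Uniformity ENNReal

section FlipFlopAux

variable {f : X → X} {K : Set X} {φ : X → ℝ}

private lemma FlipFlopFamily.mem_union_of_bool (𝔉 : FlipFlopFamily f K φ) {b : Bool} {E : Set X}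
    (h : E ∈ (if b then 𝔉.pos else 𝔉.neg)) : E ∈ 𝔉.pos ∪ 𝔉.neg := by
  cases b
  · exact Or.inr (by simpa using h)
  · exact Or.inl (by simpa using h)

/-- One refinement step: inside a compact set whose `n`-th image is a member of the family,
find a compact subset whose `(n+1)`-st image is a member of the prescribed sign. -/
private lemma flip_step (hf : Continuous f) (𝔉 : FlipFlopFamily f K φ) :
    ∀ (n : ℕ) (C : Set X) (b : Bool), IsCompact C → C.Nonempty →
      f^[n] '' C ∈ 𝔉.pos ∪ 𝔉.neg →
      ∃ C', C' ⊆ C ∧ IsCompact C' ∧ C'.Nonempty ∧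
        f^[n+1] '' C' ∈ (if b then 𝔉.pos else 𝔉.neg) := by
  intro n C b hC _hCne hmem
  obtain ⟨E', hE'c, hE'sub, hE'im⟩ : ∃ E', IsCompact E' ∧ E' ⊆ f^[n] '' C ∧
      f '' E' ∈ (if b then 𝔉.pos else 𝔉.neg) := by
    cases b
    · simpa using 𝔉.ff2_neg _ hmem
    · simpa using 𝔉.ff2_pos _ hmem
  have hE'ne : E'.Nonempty :=
    Set.image_nonempty.1 (𝔉.mem_nonempty _ (𝔉.mem_union_of_bool hE'im))
  refine ⟨C ∩ f^[n] ⁻¹' E', Set.inter_subset_left,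
    hC.inter_right ((hE'c.isClosed).preimage (hf.iterate n)), ?_, ?_⟩
  · obtain ⟨e, he⟩ := hE'ne
    obtain ⟨z, hzC, hze⟩ := hE'sub he
    exact ⟨z, hzC, by simp only [Set.mem_preimage, hze]; exact he⟩
  · have him : f^[n] '' (C ∩ f^[n] ⁻¹' E') = E' := by
      apply subset_antisymm
      · rintro _ ⟨z, ⟨-, hz⟩, rfl⟩; exact hz
      · intro e he
        obtain ⟨z, hzC, rfl⟩ := hE'sub he
        exact ⟨z, ⟨hzC, he⟩, rfl⟩
    rw [Function.iterate_succ', Set.image_comp, him]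
    exact hE'im

/-- Inside any member of the flip-flop family there is a point realizing any prescribed
itinerary of signs of `φ` along its orbit. -/
private lemma exists_itinerary (hf : Continuous f) (𝔉 : FlipFlopFamily f K φ)
    {D : Set X} (hD : D ∈ 𝔉.pos ∪ 𝔉.neg) (ω : ℕ → Bool) :
    ∃ x ∈ D, (∀ n, f^[n] x ∈ K) ∧
      ∀ n, if ω n then 𝔉.α < φ (f^[n+1] x) else φ (f^[n+1] x) < -𝔉.α := by
  choose! F hsub hcomp hne himg using flip_step hf 𝔉
  set S : ℕ → Set X := fun n => Nat.rec D (fun n C => F n C (ω n)) n with hS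
  have hSsucc : ∀ n, S (n+1) = F n (S n) (ω n) := fun n => rfl
  have hInv : ∀ n, IsCompact (S n) ∧ (S n).Nonempty ∧ f^[n] '' S n ∈ 𝔉.pos ∪ 𝔉.neg := by
    intro n
    induction n with
    | zero =>
      refine ⟨𝔉.mem_compact D hD, 𝔉.mem_nonempty D hD, ?_⟩
      simp only [Function.iterate_zero, Set.image_id]
      exact hD
    | succ n ih =>
      obtain ⟨h1, h2, h3⟩ := ih
      rw [hSsucc n]
      exact ⟨hcomp n (S n) (ω n) h1 h2 h3, hne n (S n) (ω n) h1 h2 h3,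
        𝔉.mem_union_of_bool (himg n (S n) (ω n) h1 h2 h3)⟩
  have hmono : ∀ n, S (n+1) ⊆ S n := by
    intro n
    rw [hSsucc n]
    exact hsub n (S n) (ω n) (hInv n).1 (hInv n).2.1 (hInv n).2.2
  obtain ⟨x, hx⟩ := IsCompact.nonempty_iInter_of_sequence_nonempty_isCompact_isClosed S hmono
    (fun n => (hInv n).2.1) (hInv 0).1 (fun n => (hInv n).1.isClosed)
  rw [Set.mem_iInter] at hx
  have himg' : ∀ n, f^[n+1] '' S (n+1) ∈ (if ω n then 𝔉.pos else 𝔉.neg) := by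
    intro n
    rw [hSsucc n]
    exact himg n (S n) (ω n) (hInv n).1 (hInv n).2.1 (hInv n).2.2
  refine ⟨x, hx 0, fun n => ?_, fun n => ?_⟩
  · exact 𝔉.mem_subset _ (hInv n).2.2 (Set.mem_image_of_mem _ (hx n))
  · have hmem : f^[n+1] x ∈ f^[n+1] '' S (n+1) := Set.mem_image_of_mem _ (hx (n+1))
    have h2 := himg' n
    rcases hb : ω n with _ | _
    · rw [hb] at h2
      simp only [Bool.false_eq_true, if_false] at h2 ⊢
      exact 𝔉.ff1_neg _ h2 _ hmem
    · rw [hb] at h2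
      simp only [if_true] at h2 ⊢
      exact 𝔉.ff1_pos _ h2 _ hmem

end FlipFlopAux

/-! ### A universal binary sequence -/

/-- Starting position of the `k`-th block (of length `k+1`). -/
private def wstart (k : ℕ) : ℕ := ∑ j ∈ Finset.range k, (j + 1)

private lemma wstart_succ (k : ℕ) : wstart (k+1) = wstart k + (k+1) :=
  Finset.sum_range_succ _ _

private lemma wstart_strictMono : StrictMono wstart :=
  strictMono_nat_of_lt_succ fun n => by rw [wstart_succ]; omega

private lemma le_wstart : ∀ k, k ≤ wstart k := by
  intro k
  induction k with
  | zero => exact le_rfl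
  | succ n ih => rw [wstart_succ]; omega

/-- The block containing position `p`. -/
private def wblk (p : ℕ) : ℕ := Nat.findGreatest (fun k => wstart k ≤ p) p

private lemma wblk_eq {k i : ℕ} (hi : i ≤ k) : wblk (wstart k + i) = k := by
  have hkp : k ≤ wstart k + i := le_trans (le_wstart k) (Nat.le_add_right _ _)
  have h1 : k ≤ wblk (wstart k + i) :=
    Nat.le_findGreatest hkp (Nat.le_add_right _ _)
  refine le_antisymm ?_ h1
  by_contra h
  push_neg at h
  have hP : wstart (wblk (wstart k + i)) ≤ wstart k + i :=
    Nat.findGreatest_spec (P := fun k' => wstart k' ≤ wstart k + i) hkp (Nat.le_add_right _ _)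
  have : wstart (k+1) ≤ wstart (wblk (wstart k + i)) := wstart_strictMono.monotone h
  rw [wstart_succ] at this
  omega

/-- The universal binary sequence: on the `k`-th block it spells out the binary digits of
`(Nat.unpair k).2`. -/
private def omegaStar (p : ℕ) : Bool :=
  Nat.testBit (Nat.unpair (wblk p)).2 (p - wstart (wblk p))

private lemma omegaStar_eq {k i : ℕ} (hi : i ≤ k) :
    omegaStar (wstart k + i) = Nat.testBit (Nat.unpair k).2 i := by
  unfold omegaStar
  rw [wblk_eq hi]
  congr 1
  omega

private lemma bits_differ {m c c' : ℕ} (hc : c < 2^m) (hc' : c' < 2^m) (hne : c ≠ c') :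
    ∃ i < m, Nat.testBit c i ≠ Nat.testBit c' i := by
  by_contra h
  push_neg at h
  apply hne
  apply Nat.eq_of_testBit_eq
  intro i
  by_cases him : i < m
  · exact h i him
  · push_neg at him
    rw [Nat.testBit_eq_false_of_lt (lt_of_lt_of_le hc (Nat.pow_le_pow_right (by norm_num) him)),
      Nat.testBit_eq_false_of_lt (lt_of_lt_of_le hc' (Nat.pow_le_pow_right (by norm_num) him))]

/-- Positive entropy from flip-flop families: there is a positive integer `τ` depending only
on the flip-flop family such that every member `D` of `𝔉` contains a point `x` with
`h_top(f | ω(x)) ≥ (log 2)/τ`, where `ω(x)` is the ω-limit set of `x` and `h_top` is the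
topological (cover) entropy. -/
theorem flipFlop_positive_entropy
    {f : X → X} {K : Set X} {φ : X → ℝ}
    (hf : Continuous f) (hK : IsCompact K) (hφ : ContinuousOn φ K)
    (𝔉 : FlipFlopFamily f K φ) :
    ∃ τ : ℕ, 0 < τ ∧ ∀ D ∈ 𝔉.pos ∪ 𝔉.neg, ∃ x ∈ D,
      ((Real.log 2 / τ : ℝ) : EReal) ≤
        Dynamics.coverEntropy f {y : X | MapClusterPt y atTop fun n => f^[n] x} := by
  classical
  -- uniform continuity of φ on K
  obtain ⟨δ, hδpos, hδ⟩ : ∃ δ > 0, ∀ a ∈ K, ∀ b ∈ K, dist a b < δ → |φ a - φ b| < 𝔉.α := by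
    have h := hK.uniformContinuousOn_of_continuous hφ
    rw [Metric.uniformContinuousOn_iff] at h
    obtain ⟨δ, hδ, h⟩ := h 𝔉.α 𝔉.α_pos
    exact ⟨δ, hδ, fun a ha b hb hab => by
      have := h a ha b hb hab
      rwa [Real.dist_eq] at this⟩
  refine ⟨2, two_pos, fun D hD => ?_⟩
  obtain ⟨x, hxD, hxK, hsign⟩ := exists_itinerary hf 𝔉 hD omegaStar
  refine ⟨x, hxD, ?_⟩
  set Ω : Set X := {y : X | MapClusterPt y atTop fun n => f^[n] x} with hΩ
  -- realization of all finite binary words inside Ω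
  have real : ∀ m c : ℕ, ∃ y, y ∈ Ω ∧ (∀ j, f^[j] y ∈ K) ∧
      ∀ i < m, (Nat.testBit c i = true → 𝔉.α ≤ φ (f^[i+1] y)) ∧
               (Nat.testBit c i = false → φ (f^[i+1] y) ≤ -𝔉.α) := by
    intro m c
    set p : ℕ → ℕ := fun t => wstart (Nat.pair (t + m) c) with hp
    have hpmono : StrictMono p := fun a b hab =>
      wstart_strictMono (Nat.pair_lt_pair_left c (by omega))
    obtain ⟨y, hyK, σ, hσ, hconv⟩ := hK.tendsto_subseq (x := fun t => f^[p t] x)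
      (fun t => hxK _)
    have hptend : Tendsto (fun t => p (σ t)) atTop atTop :=
      (hpmono.comp hσ).tendsto_atTop
    have hyΩ : y ∈ Ω := by
      refine MapClusterPt.of_comp (u := fun n => f^[n] x) hptend ?_ |>.mono le_rfl
      exact Filter.Tendsto.mapClusterPt hconv
    have hjlim : ∀ j, Tendsto (fun t => f^[j + p (σ t)] x) atTop (𝓝 (f^[j] y)) := by
      intro j
      have h1 := ((hf.iterate j).tendsto y).comp hconv
      have h2 : ∀ t, f^[j] ((fun t => f^[p t] x) (σ t)) = f^[j + p (σ t)] x := fun t =>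
        (Function.iterate_add_apply f j (p (σ t)) x).symm
      simpa only [Function.comp_def, h2] using h1
    have hjK : ∀ j, f^[j] y ∈ K := fun j =>
      hK.isClosed.mem_of_tendsto (hjlim j) (Eventually.of_forall fun t => hxK _)
    refine ⟨y, hyΩ, hjK, fun i hi => ?_⟩
    have hφlim : Tendsto (fun t => φ (f^[(i+1) + p (σ t)] x)) atTop (𝓝 (φ (f^[i+1] y))) := by
      have hcw : ContinuousWithinAt φ K (f^[i+1] y) := hφ _ (hjK (i+1))
      apply hcw.tendsto.comp
      rw [tendsto_nhdsWithin_iff]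
      exact ⟨hjlim (i+1), Eventually.of_forall fun t => hxK _⟩
    have hsig : ∀ t, omegaStar (p (σ t) + i) = Nat.testBit c i := by
      intro t
      have h1 : i ≤ Nat.pair (σ t + m) c :=
        le_trans (le_trans hi.le (Nat.le_add_left m _)) (Nat.left_le_pair _ _)
      have := omegaStar_eq (k := Nat.pair (σ t + m) c) (i := i) h1
      rwa [Nat.unpair_pair] at this
    constructor
    · intro hbit
      apply ge_of_tendsto hφlim
      apply Eventually.of_forall
      intro t
      have h2 := hsign (p (σ t) + i)
      rw [hsig t, hbit] at h2
      rw [if_pos rfl] at h2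
      have h3 : p (σ t) + i + 1 = (i+1) + p (σ t) := by ring
      rw [h3] at h2
      exact h2.le
    · intro hbit
      apply le_of_tendsto hφlim
      apply Eventually.of_forall
      intro t
      have h2 := hsign (p (σ t) + i)
      rw [hsig t, hbit] at h2
      simp only [Bool.false_eq_true, if_false] at h2
      have h3 : p (σ t) + i + 1 = (i+1) + p (σ t) := by ring
      rw [h3] at h2
      exact h2.le
  choose y hyΩ hyK hysign using real
  -- the entourage
  set U : Set (X × X) := {q : X × X | dist q.1 q.2 < δ/2} with hU
  have hUuni : U ∈ 𝓤 X := Metric.dist_mem_uniformity (by positivity)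
  -- separation
  have key : ∀ m c c' i, i < m → Nat.testBit c i ≠ Nat.testBit c' i →
      Disjoint (ball (y m c) (dynEntourage f U (m+1)))
        (ball (y m c') (dynEntourage f U (m+1))) := by
    intro m c c' i him hbit
    rw [Set.disjoint_left]
    intro z hz hz'
    rw [mem_ball_dynEntourage] at hz hz'
    have h1 : dist (f^[i+1] (y m c)) (f^[i+1] z) < δ/2 := hz (i+1) (by omega)
    have h2 : dist (f^[i+1] (y m c')) (f^[i+1] z) < δ/2 := hz' (i+1) (by omega)
    have hd : dist (f^[i+1] (y m c)) (f^[i+1] (y m c')) < δ := by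
      have := dist_triangle (f^[i+1] (y m c)) (f^[i+1] z) (f^[i+1] (y m c'))
      rw [dist_comm (f^[i+1] z)] at this
      linarith
    have hlt := hδ _ (hyK m c (i+1)) _ (hyK m c' (i+1)) hd
    rcases Bool.eq_false_or_eq_true (Nat.testBit c i) with h | h
    · have h' : Nat.testBit c' i = false := by
        rcases Bool.eq_false_or_eq_true (Nat.testBit c' i) with h'' | h''
        · exact absurd (h.trans h''.symm) hbit
        · exact h''
      have ha := ((hysign m c i him).1) h
      have hb := ((hysign m c' i him).2) h'
      rw [abs_lt] at hlt
      have := 𝔉.α_pos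
      linarith
    · have h' : Nat.testBit c' i = true := by
        rcases Bool.eq_false_or_eq_true (Nat.testBit c' i) with h'' | h''
        · exact h''
        · exact absurd (h.trans h''.symm) hbit
      have ha := ((hysign m c i him).2) h
      have hb := ((hysign m c' i him).1) h'
      rw [abs_lt] at hlt
      have := 𝔉.α_pos
      linarith
  have yne : ∀ m c c', c < 2^m → c' < 2^m → c ≠ c' → y m c ≠ y m c' := by
    intro m c c' hc hc' hne heq
    obtain ⟨i, him, hbit⟩ := bits_differ hc hc' hne
    have hdisj := key m c c' i him hbit
    rw [heq] at hdisj
    have hmem : y m c' ∈ ball (y m c') (dynEntourage f U (m+1)) := by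
      rw [mem_ball_dynEntourage]
      intro k _
      simp only [hU, Set.mem_setOf_eq, ball, Set.mem_preimage]
      simpa using (by positivity : (0:ℝ) < δ/2)
    exact Set.disjoint_left.1 hdisj hmem hmem
  -- large dynamical nets in Ω
  have hcard : ∀ m : ℕ, ((2^m : ℕ) : ℕ∞) ≤ netMaxcard f Ω U (m+1) := by
    intro m
    set s : Finset X := (Finset.range (2^m)).image (y m) with hs
    have hinj : Set.InjOn (y m) (Finset.range (2^m) : Set ℕ) := by
      intro c hc c' hc' heq
      by_contra hne
      exact yne m c c' (by simpa using hc) (by simpa using hc') hne heq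
    have hnet : IsDynNetIn f Ω U (m+1) (s : Set X) := by
      constructor
      · intro a ha
        simp only [hs, Finset.coe_image, Set.mem_image, Finset.coe_range, Set.mem_Iio] at ha
        obtain ⟨c, _, rfl⟩ := ha
        exact hyΩ m c
      · intro a ha b hb hab
        simp only [hs, Finset.coe_image, Set.mem_image, Finset.coe_range, Set.mem_Iio] at ha hb
        obtain ⟨c, hc, rfl⟩ := ha
        obtain ⟨c', hc', rfl⟩ := hb
        have hne : c ≠ c' := fun h => hab (by rw [h])
        obtain ⟨i, him, hbit⟩ := bits_differ hc hc' hne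
        exact key m c c' i him hbit
    have hle := hnet.card_le_netMaxcard
    rwa [hs, Finset.card_image_of_injOn (by simpa using hinj), Finset.card_range] at hle
  -- entropy estimate
  have hent : ((Real.log 2 / 2 : ℝ) : EReal) ≤ netEntropyEntourage f Ω U := by
    apply le_limsup_of_frequently_le'
    rw [frequently_atTop]
    intro a
    refine ⟨a + 2, by omega, ?_⟩
    set m : ℕ := a + 1 with hm
    have hn : a + 2 = m + 1 := by omega
    rw [hn]
    have h1 : ((2:ℝ≥0∞))^m ≤ ((netMaxcard f Ω U (m+1) : ℕ∞) : ℝ≥0∞) := by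
      have h0 := ENat.toENNReal_le.2 (hcard m)
      refine le_trans (le_of_eq ?_) h0
      push_cast
      rfl
    have h2 : ((m : ℕ) : EReal) * ENNReal.log 2 ≤ ENNReal.log (netMaxcard f Ω U (m+1)) := by
      rw [← ENNReal.log_pow]
      exact ENNReal.log_monotone h1
    have hlog2 : ENNReal.log 2 = ((Real.log 2 : ℝ) : EReal) := by
      rw [show ((2:ℝ≥0∞)) = ENNReal.ofReal 2 by norm_num,
        ENNReal.log_ofReal_of_pos (by norm_num)]
    have h3 : (((m * Real.log 2 : ℝ)) : EReal) ≤ ENNReal.log (netMaxcard f Ω U (m+1)) := by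
      refine le_trans (le_of_eq ?_) h2
      rw [EReal.coe_mul, hlog2, EReal.coe_coe_eq_natCast]
    have h4 : ((((m : ℝ) * Real.log 2) : ℝ) : EReal) / ((m+1 : ℕ) : EReal) ≤
        ENNReal.log (netMaxcard f Ω U (m+1)) / ((m+1 : ℕ) : EReal) :=
      EReal.div_le_div_right_of_nonneg (Nat.cast_nonneg' _) h3
    refine le_trans ?_ h4
    rw [show (((m+1 : ℕ)) : EReal) = (((m+1 : ℕ) : ℝ) : EReal) from
        (EReal.coe_coe_eq_natCast _).symm, ← EReal.coe_div, EReal.coe_le_coe_iff]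
    have hlog2pos : 0 ≤ Real.log 2 := Real.log_nonneg (by norm_num)
    have hm1 : (1:ℝ) ≤ (m : ℝ) := Nat.one_le_cast.mpr (by omega)
    rw [div_le_div_iff₀ (by norm_num) (by positivity)]
    push_cast
    nlinarith [hlog2pos, hm1]
  -- conclude
  have hΩsup : netEntropyEntourage f Ω U ≤ coverEntropy f Ω := by
    rw [coverEntropy_eq_iSup_netEntropyEntourage]
    exact le_iSup₂ (f := fun U _ => netEntropyEntourage f Ω U) U hUuni
  refine le_trans (le_of_eq ?_) (le_trans hent hΩsup)
  norm_num
end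

section
/- Limit points of controlled points are controlled: let K be compact, f continuous, φ : K → ℝ continuous, fix β > 0 and t ∈ ℕ*. Suppose x_j → x where each x_j is (β, t, T_j)-controlled with T_j → ∞ (so all iterates f^i(x_j), 0 ≤ i < T_j, lie in K). Then the full forward orbit of x lies in K and x is (β, t, ∞)-controlled. -/
open Filter Topology Set

variable {X : Type*} [MetricSpace X]

/-- `x` is `(β, t, T)`-controlled for finite `T`: the first `T` iterates stay in `K` and
there is a set `P ⊆ {0, …, T}` of control times containing `0` and `T` whose consecutive
elements `k < l` satisfy `l - k ≤ t` and `|birkhoff (l-k) (f^[k] x)| ≤ β * (l - k)`. -/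
def ControlledFinAt (f : X → X) (K : Set X) (φ : X → ℝ) (β : ℝ) (t T : ℕ) (x : X) : Prop :=
  (∀ i < T, f^[i] x ∈ K) ∧
  ∃ P : Set ℕ, 0 ∈ P ∧ T ∈ P ∧ P ⊆ Set.Icc 0 T ∧
    ∀ k ∈ P, ∀ l ∈ P, k < l → (∀ m ∈ P, ¬(k < m ∧ m < l)) →
      l - k ≤ t ∧ |birkhoff f φ (l - k) (f^[k] x)| ≤ β * ((l - k : ℕ) : ℝ)


/-- In a control-time set spanning `[0, Tj]` with consecutive gaps at most `t`,
every window `[N, N+t]` with `N ≤ Tj` contains a control time. -/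
lemma exists_ctrl_between {P : Set ℕ} {t Tj : ℕ} (h0 : 0 ∈ P) (hTP : Tj ∈ P)
    (hcons : ∀ k ∈ P, ∀ l ∈ P, k < l → (∀ m ∈ P, ¬(k < m ∧ m < l)) → l - k ≤ t)
    {N : ℕ} (hN : N ≤ Tj) : ∃ n ∈ P, N ≤ n ∧ n ≤ N + t := by
  by_cases hNP : N ∈ P
  · exact ⟨N, hNP, le_rfl, Nat.le_add_right _ _⟩
  · set S := {n ∈ P | N ≤ n} with hS
    have hSne : S.Nonempty := ⟨Tj, hTP, hN⟩
    set l := sInf S with hl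
    have hlS : l ∈ S := Nat.sInf_mem hSne
    have hlP : l ∈ P := hlS.1
    have hNl : N < l := lt_of_le_of_ne hlS.2 (fun h => hNP (h ▸ hlP))
    set S' := {n ∈ P | n < l} with hS'
    have hS'ne : S'.Nonempty := ⟨0, h0, by omega⟩
    have hbdd : BddAbove S' := ⟨l, fun n hn => hn.2.le⟩
    set k := sSup S' with hk
    have hkS' : k ∈ S' := Nat.sSup_mem hS'ne hbdd
    have hkN : k ≤ N := by
      by_contra h
      have hmem : k ∈ S := ⟨hkS'.1, le_of_not_ge h⟩
      exact absurd (Nat.sInf_le hmem) (not_le.mpr hkS'.2)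
    have hgap : ∀ m ∈ P, ¬(k < m ∧ m < l) := by
      rintro m hm ⟨h1, h2⟩
      exact absurd (le_csSup hbdd ⟨hm, h2⟩) (not_le.mpr h1)
    have hle := hcons k hkS'.1 l hlP hkS'.2 hgap
    exact ⟨l, hlP, hNl.le, by omega⟩

/-- Limit points of controlled points are controlled: if `xseq j → x` with each `xseq j`
`(β, t, T j)`-controlled and `T j → ∞`, then the full forward orbit of `x` stays in `K`
and `x` is `(β, t, ∞)`-controlled. -/
theorem controlledAt_of_limit
    {f : X → X} {K : Set X} {φ : X → ℝ}
    (hf : Continuous f) (hK : IsCompact K) (hφ : ContinuousOn φ K)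
    {β : ℝ} {t : ℕ} (hβ : 0 < β) (ht : 0 < t)
    {xseq : ℕ → X} {x : X} (hlim : Tendsto xseq atTop (𝓝 x))
    {T : ℕ → ℕ} (hTtop : Tendsto T atTop atTop)
    (hctrl : ∀ j, ControlledFinAt f K φ β t (T j) (xseq j)) :
    (∀ n : ℕ, f^[n] x ∈ K) ∧ ControlledAt f K φ β t x := by
  classical
  have hmemK : ∀ j, ∀ i < T j, f^[i] (xseq j) ∈ K := fun j => (hctrl j).1
  choose Pm h0 hTP hsub hcons using fun j => (hctrl j).2
  -- the orbit of x stays in K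
  have horb : ∀ n : ℕ, f^[n] x ∈ K := by
    intro n
    have h1 : Tendsto (fun j => f^[n] (xseq j)) atTop (𝓝 (f^[n] x)) :=
      ((hf.iterate n).tendsto x).comp hlim
    refine hK.isClosed.mem_of_tendsto h1 ?_
    filter_upwards [hTtop.eventually_gt_atTop n] with j hj
    exact hmemK j n hj
  -- diagonal extraction via compactness of ℕ → Bool
  set g : ℕ → ℕ → Bool := fun j n => decide (n ∈ Pm j) with hg
  obtain ⟨L, -, ψ, hψ, hgL⟩ :=
    IsCompact.tendsto_subseq (isCompact_univ (X := ℕ → Bool)) (fun j => Set.mem_univ (g j))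
  set P : Set ℕ := {n | L n = true} with hPdef
  have hTψ : Tendsto (fun m => T (ψ m)) atTop atTop := hTtop.comp hψ.tendsto_atTop
  have hstab : ∀ n : ℕ, ∀ᶠ m in atTop, (n ∈ Pm (ψ m) ↔ n ∈ P) := by
    intro n
    have h := tendsto_pi_nhds.mp hgL n
    rw [nhds_discrete, tendsto_pure] at h
    filter_upwards [h] with m hm
    simp only [Function.comp, hg] at hm
    rw [hPdef, Set.mem_setOf_eq, ← hm, decide_eq_true_iff]
  have hwin : ∀ N : ℕ, ∀ᶠ m in atTop, ∀ i ≤ N, (i ∈ Pm (ψ m) ↔ i ∈ P) := by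
    intro N
    have h : ∀ᶠ m in atTop, ∀ i ∈ Set.Iic N, (i ∈ Pm (ψ m) ↔ i ∈ P) :=
      (Filter.eventually_all_finite (Set.finite_Iic N)).mpr (fun i _ => hstab i)
    filter_upwards [h] with m hm i hi
    exact hm i hi
  have h0P : (0 : ℕ) ∈ P := by
    obtain ⟨m, hm⟩ := (hstab 0).exists
    exact hm.mp (h0 (ψ m))
  have hgrow : ∀ N : ℕ, ∃ n ∈ P, N ≤ n := by
    intro N
    obtain ⟨m, hm, hTm⟩ := ((hwin (N + t)).and (hTψ.eventually_ge_atTop (N + t))).exists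
    obtain ⟨n, hn, hNn, hnNt⟩ := exists_ctrl_between (h0 (ψ m)) (hTP (ψ m))
      (fun a ha b hb hab hgp => (hcons (ψ m) a ha b hb hab hgp).1)
      (le_trans (Nat.le_add_right N t) hTm)
    exact ⟨n, (hm n hnNt).mp hn, hNn⟩
  have hinf : P.Infinite := by
    refine Set.infinite_of_not_bddAbove ?_
    rintro ⟨b, hb⟩
    obtain ⟨n, hn, hbn⟩ := hgrow (b + 1)
    have := hb hn
    omega
  refine ⟨horb, horb, P, h0P, hinf, ?_⟩
  intro k hk l hl hkl hgap
  have hev : ∀ᶠ m in atTop, k ∈ Pm (ψ m) ∧ l ∈ Pm (ψ m) ∧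
      (∀ p ∈ Pm (ψ m), ¬(k < p ∧ p < l)) ∧ l ≤ T (ψ m) := by
    filter_upwards [hwin l, hTψ.eventually_ge_atTop l] with m hm hTm
    refine ⟨(hm k hkl.le).mpr hk, (hm l le_rfl).mpr hl, ?_, hTm⟩
    rintro p hp ⟨h1, h2⟩
    exact hgap p ((hm p h2.le).mp hp) ⟨h1, h2⟩
  obtain ⟨m₀, hm₀⟩ := hev.exists
  refine ⟨(hcons (ψ m₀) k hm₀.1 l hm₀.2.1 hkl hm₀.2.2.1).1, ?_⟩
  have hb : Tendsto (fun m => birkhoff f φ (l - k) (f^[k] (xseq (ψ m)))) atTop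
      (𝓝 (birkhoff f φ (l - k) (f^[k] x))) := by
    unfold birkhoff
    refine tendsto_finset_sum _ (fun i hi => ?_)
    simp only [Finset.mem_range] at hi
    have hz : f^[i] (f^[k] x) ∈ K := by
      rw [← Function.iterate_add_apply]; exact horb _
    have hcw : ContinuousWithinAt φ K (f^[i] (f^[k] x)) := hφ _ hz
    apply hcw.tendsto.comp
    rw [tendsto_nhdsWithin_iff]
    constructor
    · exact (((hf.iterate i).comp (hf.iterate k)).tendsto x).comp (hlim.comp hψ.tendsto_atTop)
    · filter_upwards [hTψ.eventually_ge_atTop l] with m hTm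
      have hmem : f^[i + k] (xseq (ψ m)) ∈ K := hmemK (ψ m) (i + k) (by omega)
      rwa [Function.iterate_add_apply] at hmem
  refine le_of_tendsto hb.abs ?_
  filter_upwards [hev] with m hm
  exact (hcons (ψ m) k hm.1 l hm.2.1 hkl hm.2.2.1).2
end

section
/- Existence of safety domains for induced maps: let f be a homeomorphism of a compact manifold, U, U_1, …, U_k open sets and n_1, …, n_k positive integers such that the closures Ū_i are pairwise disjoint and contained in U, f^j(Ū_i) ∩ Ū = ∅ for all 0 < j < n_i, and f^{n_i}(Ū_i) ⊆ U. Then for every family of open neighborhoods Ũ_i ⊇ Ū_i there exist open sets V_{i,j} (1 ≤ i ≤ k, 0 ≤ j ≤ n_i − 1) with V̄_{i,j} ⊆ f^j(Ũ_i), pairwise disjoint closures, Ū_i ⊆ V_{i,0} ⊆ U, f(V̄_{i,j}) ⊆ V_{i,j+1} for j < n_i − 1, and f(V̄_{i,n_i−1}) ⊆ U. -/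
open Set

variable {X : Type*} [MetricSpace X] [CompactSpace X]

/-- Finitely many pairwise disjoint compact sets, each inside a given open set, admit open
neighborhoods with pairwise disjoint closures contained in the given open sets. -/
lemma exists_disjoint_closure_nbhds {ι : Type*} [Finite ι] [DecidableEq ι]
    (K O : ι → Set X) (hK : ∀ p, IsCompact (K p)) (hO : ∀ p, IsOpen (O p))
    (hKO : ∀ p, K p ⊆ O p) (hd : Pairwise (Function.onFun Disjoint K)) :
    ∃ W : ι → Set X, (∀ p, IsOpen (W p)) ∧ (∀ p, K p ⊆ W p) ∧
      (∀ p, closure (W p) ⊆ O p) ∧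
      Pairwise fun p q => Disjoint (closure (W p)) (closure (W q)) := by
  have hsep : ∀ p q : ι, p ≠ q →
      ∃ δ, 0 < δ ∧ Disjoint (Metric.cthickening δ (K p)) (Metric.cthickening δ (K q)) := by
    intro p q h
    obtain ⟨δ, hδ, hdd⟩ := (hd h).exists_cthickenings (hK p) (hK q).isClosed
    exact ⟨δ, hδ, hdd⟩
  choose! δ hδpos hδdisj using hsep
  set d : ι → ι → ℝ := fun p q => min (δ p q) (δ q p) with hdDef
  have hdpos : ∀ p q, p ≠ q → 0 < d p q := fun p q h =>
    lt_min (hδpos p q h) (hδpos q p h.symm)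
  choose S hSopen hSsub hScl using fun p =>
    normal_exists_closure_subset (hK p).isClosed (hO p) (hKO p)
  refine ⟨fun p => S p ∩ ⋂ q, ⋂ _ : q ≠ p, Metric.thickening (d p q) (K p), ?_, ?_, ?_, ?_⟩
  · intro p
    exact (hSopen p).inter (isOpen_iInter_of_finite fun q =>
      isOpen_iInter_of_finite fun _ => Metric.isOpen_thickening)
  · intro p
    exact subset_inter (hSsub p) (subset_iInter fun q => subset_iInter fun hq =>
      Metric.self_subset_thickening (hdpos p q hq.symm) _)
  · intro p
    exact (closure_mono inter_subset_left).trans (hScl p)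
  · intro p q hpq
    have h1 : closure (S p ∩ ⋂ q', ⋂ _ : q' ≠ p, Metric.thickening (d p q') (K p)) ⊆
        Metric.cthickening (δ p q) (K p) := by
      have hsub : (S p ∩ ⋂ q', ⋂ _ : q' ≠ p, Metric.thickening (d p q') (K p)) ⊆
          Metric.thickening (d p q) (K p) :=
        inter_subset_right.trans (iInter_subset_of_subset q (iInter_subset _ hpq.symm))
      calc closure (S p ∩ ⋂ q', ⋂ _ : q' ≠ p, Metric.thickening (d p q') (K p))
          ⊆ closure (Metric.thickening (d p q) (K p)) := closure_mono hsub
        _ ⊆ Metric.cthickening (d p q) (K p) :=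
            Metric.closure_thickening_subset_cthickening _ _
        _ ⊆ Metric.cthickening (δ p q) (K p) :=
            Metric.cthickening_mono (min_le_left _ _) _
    have h2 : closure (S q ∩ ⋂ q', ⋂ _ : q' ≠ q, Metric.thickening (d q q') (K q)) ⊆
        Metric.cthickening (δ p q) (K q) := by
      have hsub : (S q ∩ ⋂ q', ⋂ _ : q' ≠ q, Metric.thickening (d q q') (K q)) ⊆
          Metric.thickening (d q p) (K q) :=
        inter_subset_right.trans (iInter_subset_of_subset p (iInter_subset _ hpq))
      calc closure (S q ∩ ⋂ q', ⋂ _ : q' ≠ q, Metric.thickening (d q q') (K q))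
          ⊆ closure (Metric.thickening (d q p) (K q)) := closure_mono hsub
        _ ⊆ Metric.cthickening (d q p) (K q) :=
            Metric.closure_thickening_subset_cthickening _ _
        _ ⊆ Metric.cthickening (δ p q) (K q) :=
            Metric.cthickening_mono (min_le_right _ _) _
    exact (hδdisj p q hpq).mono h1 h2

/-- Backward-recursive shrinking along a chain of compact sets pushed forward by `f`. -/
lemma exists_chain_shrinking (f : X → X) (hf : Continuous f) :
    ∀ n : ℕ, 0 < n → ∀ (C O' : ℕ → Set X) (T : Set X),
      (∀ j < n, IsCompact (C j)) → (∀ j < n, IsOpen (O' j)) → (∀ j < n, C j ⊆ O' j) →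
      (∀ j, j + 1 < n → f '' C j ⊆ C (j + 1)) → IsOpen T → f '' C (n - 1) ⊆ T →
      ∃ V : ℕ → Set X, (∀ j < n, IsOpen (V j)) ∧ (∀ j < n, C j ⊆ V j) ∧
        (∀ j < n, closure (V j) ⊆ O' j) ∧
        (∀ j, j + 1 < n → f '' closure (V j) ⊆ V (j + 1)) ∧
        f '' closure (V (n - 1)) ⊆ T := by
  intro n
  induction n with
  | zero => omega
  | succ n ih =>
    intro _ C O' T hC hO' hCO hchain hT htop
    rcases Nat.eq_zero_or_pos n with rfl | hn
    · -- base case n + 1 = 1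
      have htop0 : f '' C 0 ⊆ T := htop
      obtain ⟨V0, hV0o, hV0s, hV0c⟩ := normal_exists_closure_subset
        (hC 0 Nat.one_pos).isClosed ((hO' 0 Nat.one_pos).inter (hT.preimage hf))
        (subset_inter (hCO 0 Nat.one_pos) (image_subset_iff.mp htop0))
      refine ⟨fun _ => V0, ?_, ?_, ?_, ?_, ?_⟩
      · intro j hj; exact hV0o
      · intro j hj; interval_cases j; exact hV0s
      · intro j hj; interval_cases j; exact hV0c.trans inter_subset_left
      · intro j hj; omega
      · exact image_subset_iff.mpr ((hV0c.trans inter_subset_right))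
    · -- inductive step, n ≥ 1
      obtain ⟨m, rfl⟩ : ∃ m, n = m + 1 := ⟨n - 1, by omega⟩
      obtain ⟨V', h1, h2, h3, h4, h5⟩ := ih hn (fun j => C (j + 1)) (fun j => O' (j + 1)) T
        (fun j hj => hC (j + 1) (by omega)) (fun j hj => hO' (j + 1) (by omega))
        (fun j hj => hCO (j + 1) (by omega)) (fun j hj => hchain (j + 1) (by omega)) hT
        (by
          have : m + 1 + 1 - 1 = (m + 1 - 1) + 1 := by omega
          rw [this] at htop
          exact htop)
      obtain ⟨V0, hV0o, hV0s, hV0c⟩ := normal_exists_closure_subset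
        (hC 0 (by omega)).isClosed
        ((hO' 0 (by omega)).inter ((h1 0 hn).preimage hf))
        (subset_inter (hCO 0 (by omega))
          (image_subset_iff.mp ((hchain 0 (by omega)).trans (h2 0 hn))))
      refine ⟨fun j => match j with | 0 => V0 | j + 1 => V' j, ?_, ?_, ?_, ?_, ?_⟩
      · rintro (_ | j) hj
        · exact hV0o
        · exact h1 j (by omega)
      · rintro (_ | j) hj
        · exact hV0s
        · exact h2 j (by omega)
      · rintro (_ | j) hj
        · exact hV0c.trans inter_subset_left
        · exact h3 j (by omega)
      · rintro (_ | j) hj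
        · exact image_subset_iff.mpr (hV0c.trans inter_subset_right)
        · exact h4 j (by omega)
      · exact h5

/-- Existence of safety domains for induced maps: given a homeomorphism `f` of a compact
space, open sets `U, U₁, …, U_k` and return times `n₁, …, n_k` defining an induced map
(the closures `Ū_i` are pairwise disjoint and contained in `U`, the intermediate iterates
of `Ū_i` avoid `Ū`, and `f^{n_i}(Ū_i) ⊆ U`), for every family of open neighborhoods
`Ũ_i ⊇ Ū_i` there are open sets `V i j` (`0 ≤ j < n_i`) with `closure (V i j) ⊆ f^j(Ũ_i)`,
pairwise disjoint closures, `Ū_i ⊆ V i 0 ⊆ U`, `f(closure (V i j)) ⊆ V i (j+1)` and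
`f(closure (V i (n_i - 1))) ⊆ U`. -/
theorem safety_domain_exists
    (f : X ≃ₜ X) {k : ℕ} (U : Set X) (Ui : Fin k → Set X) (ni : Fin k → ℕ)
    (hU : IsOpen U) (hUi : ∀ i, IsOpen (Ui i)) (hUine : ∀ i, (Ui i).Nonempty)
    (hni : ∀ i, 0 < ni i)
    (hdisj : ∀ i j : Fin k, i ≠ j → Disjoint (closure (Ui i)) (closure (Ui j)))
    (hsubU : ∀ i, closure (Ui i) ⊆ U)
    (havoid : ∀ i, ∀ j : ℕ, 0 < j → j < ni i →
      Disjoint ((f : X → X)^[j] '' closure (Ui i)) (closure U))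
    (hreturn : ∀ i, (f : X → X)^[ni i] '' closure (Ui i) ⊆ U)
    (Ut : Fin k → Set X) (hUt : ∀ i, IsOpen (Ut i)) (hUtsub : ∀ i, closure (Ui i) ⊆ Ut i) :
    ∃ V : Fin k → ℕ → Set X,
      (∀ i, ∀ j < ni i, IsOpen (V i j)) ∧
      (∀ i, ∀ j < ni i, closure (V i j) ⊆ (f : X → X)^[j] '' (Ut i)) ∧
      (∀ i i' : Fin k, ∀ j j' : ℕ, j < ni i → j' < ni i' → (i, j) ≠ (i', j') →
        Disjoint (closure (V i j)) (closure (V i' j'))) ∧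
      (∀ i, closure (Ui i) ⊆ V i 0 ∧ V i 0 ⊆ U) ∧
      (∀ i, ∀ j : ℕ, j + 1 < ni i → (f : X → X) '' closure (V i j) ⊆ V i (j + 1)) ∧
      (∀ i, (f : X → X) '' closure (V i (ni i - 1)) ⊆ U) := by
  classical
  set g : X → X := (f : X → X) with hg
  have hinj : ∀ m : ℕ, Function.Injective (g^[m]) := fun m => f.injective.iterate m
  -- pairwise disjointness of the iterates
  have Kdisj : ∀ (i i' : Fin k) (j j' : ℕ), j < ni i → j' < ni i' → (i, j) ≠ (i', j') →
      Disjoint (g^[j] '' closure (Ui i)) (g^[j'] '' closure (Ui i')) := by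
    suffices H : ∀ (i i' : Fin k) (j j' : ℕ), j' ≤ j → j < ni i → j' < ni i' →
        (i, j) ≠ (i', j') →
        Disjoint (g^[j] '' closure (Ui i)) (g^[j'] '' closure (Ui i')) by
      intro i i' j j' hj hj' hne
      rcases le_total j' j with hle | hle
      · exact H i i' j j' hle hj hj' hne
      · exact (H i' i j' j hle hj' hj (by simpa [eq_comm, Prod.ext_iff, and_comm] using hne)).symm
    intro i i' j j' hle hj hj' hne
    rcases eq_or_lt_of_le hle with rfl | hlt
    · have hii : i ≠ i' := by rintro rfl; exact hne rfl
      rw [Set.disjoint_left]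
      rintro x ⟨a, ha, rfl⟩ ⟨b, hb, hba⟩
      obtain rfl : b = a := hinj j' hba
      exact Set.disjoint_left.mp (hdisj i i' hii) ha hb
    · rw [Set.disjoint_left]
      rintro x ⟨a, ha, rfl⟩ ⟨b, hb, hba⟩
      have key : g^[j'] (g^[j - j'] a) = g^[j'] b := by
        rw [← Function.iterate_add_apply]
        rw [show j' + (j - j') = j from by omega]
        exact hba.symm
      have hb' : g^[j - j'] a = b := hinj j' key
      refine Set.disjoint_left.mp (havoid i (j - j') (by omega) (by omega))
        (Set.mem_image_of_mem _ ha) ?_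
      rw [hb']
      exact subset_closure (hsubU i' hb)
  have himage_succ : ∀ (m : ℕ) (S : Set X), g '' (g^[m] '' S) = g^[m + 1] '' S := by
    intro m S
    rw [← Set.image_comp, ← Function.iterate_succ']
  have himg_open : ∀ (m : ℕ) (S : Set X), IsOpen S → IsOpen (g^[m] '' S) := by
    intro m S hS
    have hl : Function.LeftInverse (⇑f.symm) g := f.symm_apply_apply
    have hr : Function.RightInverse (⇑f.symm) g := f.apply_symm_apply
    rw [Set.image_eq_preimage_of_inverse (hl.iterate m) (hr.iterate m)]
    exact hS.preimage (f.symm.continuous.iterate m)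
  have hKcompact : ∀ (i : Fin k) (j : ℕ), IsCompact (g^[j] '' closure (Ui i)) := fun i j =>
    (isClosed_closure.isCompact).image (f.continuous.iterate j)
  -- the index type of all (i, j) with j < ni i
  set ι := (i : Fin k) × Fin (ni i) with hι
  set KK : ι → Set X := fun p => g^[(p.2 : ℕ)] '' closure (Ui p.1) with hKK
  set OO : ι → Set X := fun p =>
    if (p.2 : ℕ) = 0 then Ut p.1 ∩ U else g^[(p.2 : ℕ)] '' Ut p.1 with hOO
  have hOOopen : ∀ p, IsOpen (OO p) := by
    rintro ⟨i, j⟩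
    by_cases h : (j : ℕ) = 0 <;> simp only [hOO, h, if_true, if_false, reduceIte]
    · exact (hUt i).inter hU
    · exact himg_open _ _ (hUt i)
  have hKOO : ∀ p, KK p ⊆ OO p := by
    rintro ⟨i, j⟩
    by_cases h : (j : ℕ) = 0 <;> simp only [hKK, hOO, h, reduceIte]
    · simp only [Function.iterate_zero, Set.image_id]
      exact subset_inter (hUtsub i) (hsubU i)
    · exact Set.image_mono (hUtsub i)
  have hKKd : Pairwise (Function.onFun Disjoint KK) := by
    rintro ⟨i, j⟩ ⟨i', j'⟩ hpq
    refine Kdisj i i' j j' j.isLt j'.isLt ?_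
    intro h
    apply hpq
    have h1 : i = i' := congrArg Prod.fst h
    subst h1
    have h2 : (j : ℕ) = (j' : ℕ) := congrArg Prod.snd h
    exact congrArg (Sigma.mk i) (Fin.ext h2)
  obtain ⟨W, hWopen, hWK, hWcl, hWdisj⟩ :=
    exists_disjoint_closure_nbhds KK OO (fun p => hKcompact p.1 p.2) hOOopen hKOO hKKd
  -- shrink along chains
  have hchainAll : ∀ i : Fin k, ∃ V : ℕ → Set X,
      (∀ j < ni i, IsOpen (V j)) ∧ (∀ j < ni i, g^[j] '' closure (Ui i) ⊆ V j) ∧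
      (∀ j < ni i, closure (V j) ⊆
        (fun j' => if h : j' < ni i then W ⟨i, ⟨j', h⟩⟩ else univ) j) ∧
      (∀ j, j + 1 < ni i → g '' closure (V j) ⊆ V (j + 1)) ∧
      g '' closure (V (ni i - 1)) ⊆ U := by
    intro i
    refine exists_chain_shrinking g f.continuous (ni i) (hni i)
      (fun j => g^[j] '' closure (Ui i))
      (fun j' => if h : j' < ni i then W ⟨i, ⟨j', h⟩⟩ else univ) U
      (fun j _ => hKcompact i j) ?_ ?_ ?_ hU ?_
    · intro j hj
      simp only [hj, dif_pos]
      exact hWopen _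
    · intro j hj
      simp only [hj, dif_pos]
      exact hWK ⟨i, ⟨j, hj⟩⟩
    · intro j hj
      rw [himage_succ]
    · rw [himage_succ, show ni i - 1 + 1 = ni i from by have := hni i; omega]
      exact hreturn i
  choose V hV1 hV2 hV3 hV4 hV5 using hchainAll
  -- closure V i j is contained in W ⟨i, j⟩
  have hVW : ∀ (i : Fin k) (j : ℕ) (hj : j < ni i), closure (V i j) ⊆ W ⟨i, ⟨j, hj⟩⟩ := by
    intro i j hj
    have := hV3 i j hj
    simpa only [hj, dif_pos] using this
  refine ⟨V, fun i j hj => hV1 i j hj, ?_, ?_, ?_, hV4, hV5⟩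
  · -- closure (V i j) ⊆ f^[j] '' Ut i
    intro i j hj
    refine (hVW i j hj).trans ((subset_closure.trans (hWcl ⟨i, ⟨j, hj⟩⟩)).trans ?_)
    by_cases h : j = 0 <;> simp only [hOO, h, reduceIte]
    · subst h
      simp only [Function.iterate_zero, Set.image_id]
      exact inter_subset_left
    · exact subset_rfl
  · -- disjoint closures
    intro i i' j j' hj hj' hne
    refine Disjoint.mono ((hVW i j hj).trans subset_closure)
      ((hVW i' j' hj').trans subset_closure) (hWdisj ?_)
    intro hss
    apply hne
    have h1 : i = i' := congrArg Sigma.fst hss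
    subst h1
    have h3 : j = j' := by
      have := congrArg (fun p : (i : Fin k) × Fin (ni i) => (p.2 : ℕ)) hss
      simpa using this
    rw [h3]
  · -- closure (Ui i) ⊆ V i 0 ⊆ U
    intro i
    constructor
    · have := hV2 i 0 (hni i)
      simpa only [Function.iterate_zero, Set.image_id] using this
    · refine (subset_closure.trans (hVW i 0 (hni i))).trans ?_
      refine (subset_closure.trans (hWcl ⟨i, ⟨0, hni i⟩⟩)).trans ?_
      simp only [hOO, reduceIte]
      exact inter_subset_right
end
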